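/- The collective-constraints superposition region dominates the TDMA region at the sum-rate: the maximum sum-rate of the TDMA region, Σ_k min{(α_k/(2δ))log((α_k+P_k)/(α_k+hP_k)), (α_k/2)log(1+P_k/α_k)}, is at most min{(1/2)log(1+P_K), (1/(2δ))log((1+P_K)/(1+hP_K))} for every probability vector α with positive entries, where P_K = Σ_k P_k. -/

import Mathlib

open Real Finset

/-- The TDMA sum-rate is dominated by the collective-constraints sum
capacity: for every probability vector `α` with positive entries,
`Σ_k min{(α_k/(2δ))log₂((α_k+P_k)/(α_k+hP_k)), (α_k/2)log₂(1+P_k/α_k)}`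
`≤ min{(1/2)log₂(1+P_K), (1/(2δ))log₂((1+P_K)/(1+hP_K))}` with `P_K = Σ_k P_k`. -/
theorem tdma_sum_rate_dominated
    (K : ℕ) (hK : 0 < K) (P : Fin K → ℝ) (hP : ∀ k, 0 < P k)
    (h δ : ℝ) (hh0 : 0 < h) (hh1 : h < 1) (hδ0 : 0 < δ) (hδ1 : δ ≤ 1)
    (α : Fin K → ℝ) (hα : ∀ k, 0 < α k) (hαsum : (∑ k, α k) = 1) :
    ∑ k, min ((α k / (2 * δ)) * logb 2 ((α k + P k) / (α k + h * P k)))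
             ((α k / 2) * logb 2 (1 + P k / α k))
      ≤ min ((1 / 2) * logb 2 (1 + ∑ k, P k))
            ((1 / (2 * δ)) * logb 2 ((1 + ∑ k, P k) / (1 + h * ∑ k, P k))) := by
  haveI : Nonempty (Fin K) := Fin.pos_iff_nonempty.mp hK
  set S := ∑ k, P k with hSdef
  have hS0 : 0 < S := Finset.sum_pos (fun k _ => hP k) Finset.univ_nonempty
  have hlog2 : (0:ℝ) < Real.log 2 := Real.log_pos one_lt_two
  have hd : ∀ k, 0 < α k + h * P k := fun k =>
    add_pos (hα k) (mul_pos hh0 (hP k))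
  have hn : ∀ k, 0 < α k + P k := fun k => add_pos (hα k) (hP k)
  have hhS : 0 < 1 + h * S := by positivity
  -- generic Jensen for log
  have jensen : ∀ p : Fin K → ℝ, (∀ k, 0 < p k) →
      ∑ k, α k * Real.log (p k) ≤ Real.log (∑ k, α k * p k) := by
    intro p hp
    have := (strictConcaveOn_log_Ioi.concaveOn).le_map_sum
      (t := Finset.univ) (w := α) (p := p)
      (fun i _ => (hα i).le) hαsum (fun i _ => hp i)
    simpa [smul_eq_mul] using this
  -- Bound A : Jensen for log(1 + P/α)
  have boundA : ∑ k, α k * Real.log (1 + P k / α k) ≤ Real.log (1 + S) := by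
    have hp : ∀ k, 0 < 1 + P k / α k := fun k => by
      have h1 := hα k; have h2 := hP k; positivity
    have := jensen (fun k => 1 + P k / α k) hp
    have hsum : ∑ k, α k * (1 + P k / α k) = 1 + S := by
      have : ∀ k ∈ Finset.univ, α k * (1 + P k / α k) = α k + P k := by
        intro k _
        rw [mul_add, mul_one, mul_div_cancel₀ _ (hα k).ne']
      rw [Finset.sum_congr rfl this, Finset.sum_add_distrib, hαsum]
    rwa [hsum] at this
  -- Bound B
  have boundB : ∑ k, α k * Real.log ((α k + P k) / (α k + h * P k))
      ≤ Real.log ((1 + S) / (1 + h * S)) := by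
    have hp : ∀ k, 0 < (α k + P k) / (α k + h * P k) := fun k =>
      div_pos (hn k) (hd k)
    have step1 := jensen (fun k => (α k + P k) / (α k + h * P k)) hp
    -- Cauchy-Schwarz (Engel form)
    have hCS : 1 / (1 + h * S) ≤ ∑ k, (α k) ^ 2 / (α k + h * P k) := by
      have := sq_sum_div_le_sum_sq_div Finset.univ α (g := fun k => α k + h * P k)
        (fun k _ => hd k)
      have hden : ∑ k, (α k + h * P k) = 1 + h * S := by
        rw [Finset.sum_add_distrib, hαsum, ← Finset.mul_sum]
      rw [hαsum, hden] at this
      simpa using this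
    have key : ∑ k, α k * ((α k + P k) / (α k + h * P k))
        = 1 + ((1 - h) / h) * (1 - ∑ k, (α k) ^ 2 / (α k + h * P k)) := by
      have hterm : ∀ k ∈ Finset.univ, α k * ((α k + P k) / (α k + h * P k))
          = α k + ((1 - h) / h) * (α k - (α k) ^ 2 / (α k + h * P k)) := by
        intro k _
        have hdk := (hd k).ne'
        have hh := hh0.ne'
        rw [sub_div' hdk, div_mul_div_comm, mul_div_assoc', add_div' _ _ _ (mul_ne_zero hh hdk), div_eq_div_iff hdk (mul_ne_zero hh hdk)]
        ring
      rw [Finset.sum_congr rfl hterm, Finset.sum_add_distrib, hαsum, ← Finset.mul_sum,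
        Finset.sum_sub_distrib, hαsum]
    have step2 : ∑ k, α k * ((α k + P k) / (α k + h * P k)) ≤ (1 + S) / (1 + h * S) := by
      rw [key]
      have h1 : 1 - ∑ k, (α k) ^ 2 / (α k + h * P k) ≤ 1 - 1 / (1 + h * S) := by
        linarith [hCS]
      have h2 : 0 ≤ (1 - h) / h := div_nonneg (by linarith) hh0.le
      have h3 : 1 + ((1 - h) / h) * (1 - 1 / (1 + h * S)) = (1 + S) / (1 + h * S) := by
        field_simp
        ring
      calc 1 + ((1 - h) / h) * (1 - ∑ k, (α k) ^ 2 / (α k + h * P k))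
          ≤ 1 + ((1 - h) / h) * (1 - 1 / (1 + h * S)) := by
            have := mul_le_mul_of_nonneg_left h1 h2
            linarith
        _ = (1 + S) / (1 + h * S) := h3
    calc ∑ k, α k * Real.log ((α k + P k) / (α k + h * P k))
        ≤ Real.log (∑ k, α k * ((α k + P k) / (α k + h * P k))) := step1
      _ ≤ Real.log ((1 + S) / (1 + h * S)) := by
          apply Real.log_le_log _ step2
          exact Finset.sum_pos (fun k _ => mul_pos (hα k) (hp k)) Finset.univ_nonempty
  -- assemble
  apply le_min
  · -- bound by (1/2) logb 2 (1+S)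
    calc ∑ k, min ((α k / (2 * δ)) * logb 2 ((α k + P k) / (α k + h * P k)))
             ((α k / 2) * logb 2 (1 + P k / α k))
        ≤ ∑ k, (α k / 2) * logb 2 (1 + P k / α k) :=
          Finset.sum_le_sum (fun k _ => min_le_right _ _)
      _ = (1 / (2 * Real.log 2)) * ∑ k, α k * Real.log (1 + P k / α k) := by
          rw [Finset.mul_sum]
          apply Finset.sum_congr rfl
          intro k _
          rw [Real.logb]
          field_simp
      _ ≤ (1 / (2 * Real.log 2)) * Real.log (1 + S) := by
          apply mul_le_mul_of_nonneg_left boundA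
          positivity
      _ = (1 / 2) * logb 2 (1 + S) := by
          rw [Real.logb]
          field_simp
  · calc ∑ k, min ((α k / (2 * δ)) * logb 2 ((α k + P k) / (α k + h * P k)))
             ((α k / 2) * logb 2 (1 + P k / α k))
        ≤ ∑ k, (α k / (2 * δ)) * logb 2 ((α k + P k) / (α k + h * P k)) :=
          Finset.sum_le_sum (fun k _ => min_le_left _ _)
      _ = (1 / (2 * δ * Real.log 2)) * ∑ k, α k * Real.log ((α k + P k) / (α k + h * P k)) := by
          rw [Finset.mul_sum]
          apply Finset.sum_congr rfl
          intro k _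
          rw [Real.logb]
          field_simp
      _ ≤ (1 / (2 * δ * Real.log 2)) * Real.log ((1 + S) / (1 + h * S)) := by
          apply mul_le_mul_of_nonneg_left boundB
          positivity
      _ = (1 / (2 * δ)) * logb 2 ((1 + S) / (1 + h * S)) := by
          rw [Real.logb]
          field_simp
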